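/- Let S = (N, M₀) be a persistent Petri net system, and let τ and σ be two firing sequences feasible at M₀. Then the sequences τ·(σ ⧵ τ) and σ·(τ ⧵ σ) are both feasible at M₀ and lead to the same marking, where σ ⧵ τ denotes the left residue of σ with respect to τ (Keller's theorem). -/

import Mathlib

open Classical

structure PetriNet (P T : Type) where
  pre  : P → T → ℕ
  post : T → P → ℕ

namespace PetriNet

variable {P T : Type}

def enabled (N : PetriNet P T) (M : P → ℕ) (t : T) : Prop :=
  ∀ p, N.pre p t ≤ M p

def fire (N : PetriNet P T) (M : P → ℕ) (t : T) : P → ℕ :=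
  fun p => M p - N.pre p t + N.post t p

def feasible (N : PetriNet P T) : (P → ℕ) → List T → Prop
  | _, [] => True
  | M, t :: σ => N.enabled M t ∧ N.feasible (N.fire M t) σ

def fireSeq (N : PetriNet P T) : (P → ℕ) → List T → (P → ℕ)
  | M, [] => M
  | M, t :: σ => N.fireSeq (N.fire M t) σ

/-- `M'` is reachable from `M` by some feasible firing sequence. -/
def reach (N : PetriNet P T) (M M' : P → ℕ) : Prop :=
  ∃ σ : List T, N.feasible M σ ∧ N.fireSeq M σ = M'

/-- Liveness: from every reachable marking, every transition can eventually be enabled. -/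
def live (N : PetriNet P T) (M0 : P → ℕ) : Prop :=
  ∀ M, N.reach M0 M → ∀ t, ∃ M', N.reach M M' ∧ N.enabled M' t

def incidence (N : PetriNet P T) (p : P) (t : T) : ℤ :=
  (N.post t p : ℤ) - (N.pre p t : ℤ)

/-- Potential reachability: the state equation `M = M0 + I·Y` has a solution `Y ∈ ℕ^T`. -/
def potReach [Fintype T] (N : PetriNet P T) (M0 M : P → ℕ) : Prop :=
  ∃ Y : T → ℕ, ∀ p, (M p : ℤ) = (M0 p : ℤ) + ∑ t, N.incidence p t * (Y t : ℤ)

/-- A siphon: a nonempty set of places whose set of input transitions is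
included in its set of output transitions. -/
def siphon (N : PetriNet P T) (D : Set P) : Prop :=
  D.Nonempty ∧ ∀ t, (∃ p ∈ D, 0 < N.post t p) → ∃ p ∈ D, 0 < N.pre p t

/-- `D` is deadlocked at `M`: every place of `D` marks below each of its output weights. -/
def deadlockedAt (N : PetriNet P T) (D : Set P) (M : P → ℕ) : Prop :=
  ∀ p ∈ D, ∀ t, 0 < N.pre p t → M p < N.pre p t

def reversible (N : PetriNet P T) (M0 : P → ℕ) : Prop :=
  ∀ M, N.reach M0 M → N.reach M M0

def deadlockable (N : PetriNet P T) (M0 : P → ℕ) : Prop :=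
  ∃ M, N.reach M0 M ∧ ∀ t, ¬ N.enabled M t

def bounded (N : PetriNet P T) (M0 : P → ℕ) : Prop :=
  ∃ k, ∀ M, N.reach M0 M → ∀ p, M p ≤ k

def structBounded (N : PetriNet P T) : Prop :=
  ∀ M0 : P → ℕ, N.bounded M0

/-- All output weights of each place are equal. -/
def homogeneous (N : PetriNet P T) : Prop :=
  ∀ p t t', 0 < N.pre p t → 0 < N.pre p t' → N.pre p t = N.pre p t'

/-- A place with at least two output transitions. -/
def sharedPlace (N : PetriNet P T) (p : P) : Prop :=
  ∃ t t', t ≠ t' ∧ 0 < N.pre p t ∧ 0 < N.pre p t'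

/-- Homogeneous net with at most one shared place. -/
def H1S (N : PetriNet P T) : Prop :=
  N.homogeneous ∧ ∀ p q, N.sharedPlace p → N.sharedPlace q → p = q

/-- H1S net such that deleting the shared place (if any) yields a WMG≤ :
every non-shared place has at most one input and at most one output transition. -/
def H1S_WMGle (N : PetriNet P T) : Prop :=
  N.H1S ∧ ∀ p, ¬ N.sharedPlace p →
    (∀ t t', 0 < N.post t p → 0 < N.post t' p → t = t') ∧
    (∀ t t', 0 < N.pre p t → 0 < N.pre p t' → t = t')

end PetriNet

namespace PetriNet

/-- Left residue of a sequence with respect to another sequence: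
cancel in the first sequence the leftmost occurrences of the symbols of the second,
read from left to right. -/
def residue {T : Type} [DecidableEq T] : List T → List T → List T
  | τ, [] => τ
  | τ, t :: σ => residue (τ.erase t) σ

/-- Persistence: at every reachable marking, firing one enabled transition cannot
disable another enabled transition. -/
def persistent {P T : Type} (N : PetriNet P T) (M0 : P → ℕ) : Prop :=
  ∀ M, N.reach M0 M → ∀ t1 t2, t1 ≠ t2 → N.enabled M t1 → N.enabled M t2 →
    N.enabled (N.fire M t1) t2

end PetriNet

namespace PetriNet

variable {P T : Type}

lemma fireSeq_append (N : PetriNet P T) (M : P → ℕ) (a b : List T) :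
    N.fireSeq M (a ++ b) = N.fireSeq (N.fireSeq M a) b := by
  induction a generalizing M with
  | nil => rfl
  | cons t a ih => simp [fireSeq, ih]

lemma feasible_append (N : PetriNet P T) (M : P → ℕ) (a b : List T) :
    N.feasible M (a ++ b) ↔ N.feasible M a ∧ N.feasible (N.fireSeq M a) b := by
  induction a generalizing M with
  | nil => simp [feasible, fireSeq]
  | cons t a ih => simp [feasible, fireSeq, ih, and_assoc]

lemma reach_trans (N : PetriNet P T) {M0 M1 M2 : P → ℕ}
    (h1 : N.reach M0 M1) (h2 : N.reach M1 M2) : N.reach M0 M2 := by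
  obtain ⟨a, ha, ha'⟩ := h1
  obtain ⟨b, hb, hb'⟩ := h2
  exact ⟨a ++ b, by rw [feasible_append]; exact ⟨ha, ha' ▸ hb⟩,
    by rw [fireSeq_append, ha']; exact hb'⟩

lemma persistent_reach (N : PetriNet P T) {M0 M : P → ℕ}
    (hp : N.persistent M0) (h : N.reach M0 M) : N.persistent M :=
  fun M' h' => hp M' (N.reach_trans h h')

lemma reach_fire (N : PetriNet P T) {M : P → ℕ} {t : T} (h : N.enabled M t) :
    N.reach M (N.fire M t) :=
  ⟨[t], ⟨h, trivial⟩, rfl⟩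

lemma fire_comm (N : PetriNet P T) {M : P → ℕ} {t s : T}
    (ht : N.enabled M t) (hs : N.enabled M s) (hts : N.enabled (N.fire M t) s)
    (hst : N.enabled (N.fire M s) t) :
    N.fire (N.fire M t) s = N.fire (N.fire M s) t := by
  funext p
  have h1 := ht p
  have h2 := hs p
  have h3 := hts p
  have h4 := hst p
  simp only [fire] at *
  omega

lemma residue_nil {T : Type} [DecidableEq T] (σ : List T) :
    residue ([] : List T) σ = [] := by
  induction σ with
  | nil => rfl
  | cons t σ ih => simpa [residue] using ih

lemma residue_cons {T : Type} [DecidableEq T] (t : T) (τ σ : List T) :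
    residue (t :: τ) σ =
      if t ∈ σ then residue τ (σ.erase t) else t :: residue τ σ := by
  induction σ generalizing τ with
  | nil => simp [residue]
  | cons s σ ih =>
    by_cases hst : s = t
    · subst hst
      simp [residue, List.erase_cons_head]
    · have ht : ((t :: τ).erase s) = t :: τ.erase s := by
        simp [List.erase_cons, Ne.symm hst]
      have hmem : (t ∈ s :: σ) ↔ t ∈ σ := by
        simp [Ne.symm hst]
      have herase : (s :: σ).erase t = s :: σ.erase t := by
        simp [List.erase_cons, hst]
      simp only [residue, ht, ih, hmem, herase]

/-- Keller's one-step lemma. -/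
lemma keller_one (N : PetriNet P T) [DecidableEq T] {M : P → ℕ}
    (hp : N.persistent M) {t : T} (σ : List T)
    (ht : N.enabled M t) (hσ : N.feasible M σ) :
    N.feasible (N.fire M t) (σ.erase t) ∧
    (t ∈ σ → N.fireSeq (N.fire M t) (σ.erase t) = N.fireSeq M σ) ∧
    (t ∉ σ → N.enabled (N.fireSeq M σ) t ∧
      N.fireSeq (N.fire M t) σ = N.fire (N.fireSeq M σ) t) := by
  induction σ generalizing M with
  | nil =>
    exact ⟨trivial, fun h => absurd h List.not_mem_nil,
      fun _ => ⟨ht, rfl⟩⟩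
  | cons s σ ih =>
    obtain ⟨hs, hσ'⟩ := hσ
    by_cases hst : s = t
    · subst hst
      refine ⟨by simpa [List.erase_cons_head] using hσ', fun _ => ?_, fun h => ?_⟩
      · simp [List.erase_cons_head, fireSeq]
      · simp at h
    · -- s ≠ t
      have hMrfl : N.reach M M := ⟨[], trivial, rfl⟩
      have hts : N.enabled (N.fire M t) s :=
        hp M hMrfl t s (fun h => hst (h.symm)) ht hs
      have hst' : N.enabled (N.fire M s) t :=
        hp M hMrfl s t hst hs ht
      have hp' : N.persistent (N.fire M s) :=
        N.persistent_reach hp (N.reach_fire hs)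
      obtain ⟨k1, k2, k3⟩ := ih hp' hst' hσ'
      have hcomm : N.fire (N.fire M t) s = N.fire (N.fire M s) t :=
        N.fire_comm ht hs hts hst'
      have herase : (s :: σ).erase t = s :: σ.erase t := by
        simp [List.erase_cons, hst]
      refine ⟨?_, fun hmem => ?_, fun hmem => ?_⟩
      · rw [herase]
        exact ⟨hts, by rw [hcomm]; exact k1⟩
      · have hmem' : t ∈ σ := by
          rcases List.mem_cons.mp hmem with h | h
          · exact absurd h.symm hst
          · exact h
        rw [herase]
        simp only [fireSeq]
        rw [hcomm, k2 hmem']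
      · have hmem' : t ∉ σ := fun h => hmem (List.mem_cons_of_mem _ h)
        obtain ⟨e1, e2⟩ := k3 hmem'
        refine ⟨e1, ?_⟩
        simp only [fireSeq]
        rw [hcomm, e2]

end PetriNet

/-- Keller's theorem: in a persistent system, for feasible `τ` and `σ`,
`τ·(σ ∖ τ)` and `σ·(τ ∖ σ)` are feasible and lead to the same marking. -/
theorem stmt4 {P T : Type} [DecidableEq T] (N : PetriNet P T) (M0 : P → ℕ)
    (hpers : N.persistent M0) (τ σ : List T)
    (hτ : N.feasible M0 τ) (hσ : N.feasible M0 σ) :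
    N.feasible M0 (τ ++ PetriNet.residue σ τ) ∧
    N.feasible M0 (σ ++ PetriNet.residue τ σ) ∧
    N.fireSeq M0 (τ ++ PetriNet.residue σ τ) =
      N.fireSeq M0 (σ ++ PetriNet.residue τ σ) := by
  induction τ generalizing M0 σ with
  | nil =>
    simp [PetriNet.residue, PetriNet.residue_nil, hσ]
  | cons t τ' ih =>
    obtain ⟨ht, hτ'⟩ := hτ
    set M1 := N.fire M0 t with hM1
    obtain ⟨k1, k2, k3⟩ := N.keller_one hpers σ ht hσ
    have hp1 : N.persistent M1 := N.persistent_reach hpers (N.reach_fire ht)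
    obtain ⟨A, B, C⟩ := ih (M0 := M1) (σ := σ.erase t) hp1 hτ' k1
    have hres1 : PetriNet.residue σ (t :: τ') = PetriNet.residue (σ.erase t) τ' := rfl
    have hres2 := PetriNet.residue_cons t τ' σ
    by_cases hmem : t ∈ σ
    · rw [if_pos hmem] at hres2
      have hfs : N.fireSeq M1 (σ.erase t) = N.fireSeq M0 σ := k2 hmem
      refine ⟨⟨ht, by rw [hres1]; exact A⟩, ?_, ?_⟩
      · rw [hres2, N.feasible_append]
        refine ⟨hσ, ?_⟩
        have := (N.feasible_append M1 (σ.erase t) _).mp B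
        rw [hfs] at this
        exact this.2
      · show N.fireSeq M0 (t :: (τ' ++ _)) = _
        rw [hres1, hres2]
        simp only [PetriNet.fireSeq]
        rw [C, N.fireSeq_append, N.fireSeq_append, hfs]
    · rw [if_neg hmem] at hres2
      have her : σ.erase t = σ := List.erase_of_not_mem hmem
      rw [her] at k1 A B C
      obtain ⟨e1, e2⟩ := k3 hmem
      refine ⟨⟨ht, by rw [hres1, her]; exact A⟩, ?_, ?_⟩
      · rw [hres2, N.feasible_append]
        refine ⟨hσ, e1, ?_⟩
        have := (N.feasible_append M1 σ _).mp B
        rw [e2] at this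
        exact this.2
      · show N.fireSeq M0 (t :: (τ' ++ _)) = _
        rw [hres1, her, hres2]
        simp only [PetriNet.fireSeq]
        rw [C, N.fireSeq_append, N.fireSeq_append]
        simp only [PetriNet.fireSeq]
        rw [e2]
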